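/- With f and S as above (f(x) = sqrt(b/c_k − Σ_{i<k} (c_i/c_k) x_i²) on S = {x ∈ (0,∞)^{k−1} : c_i² x_i² ≤ c_k² f(x)² for all i < k}), the second partial derivatives satisfy |∂²f/∂x_i∂x_j (x)| ≤ 2 / min(x₁, …, x_{k−1}, f(x)) for all x ∈ S. -/

import Mathlib

open Metric Set Finset

noncomputable def Gmap {m : ℕ} (a : Fin m → ℝ) (y : EuclideanSpace ℝ (Fin m)) :
    EuclideanSpace ℝ (Fin m) →L[ℝ] ℝ :=
  -∑ k : Fin m, ((2 * a k) * y k) • (EuclideanSpace.proj k : EuclideanSpace ℝ (Fin m) →L[ℝ] ℝ)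

lemma Gmap_apply_single {m : ℕ} (a : Fin m → ℝ) (y : EuclideanSpace ℝ (Fin m)) (l : Fin m) :
    Gmap a y (EuclideanSpace.single l 1) = -((2 * a l) * y l) := by
  simp [Gmap, ContinuousLinearMap.sum_apply, EuclideanSpace.proj,
    EuclideanSpace.single_apply]

lemma hasFDerivAt_quadric {m : ℕ} (a : Fin m → ℝ) (b : ℝ) (y : EuclideanSpace ℝ (Fin m)) :
    HasFDerivAt (fun z : EuclideanSpace ℝ (Fin m) => b - ∑ k, a k * (z k) ^ 2)
      (Gmap a y) y := by
  have h1 : ∀ k : Fin m, HasFDerivAt (fun z : EuclideanSpace ℝ (Fin m) => a k * (z k) ^ 2)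
      (((2 * a k) * y k) • (EuclideanSpace.proj k : EuclideanSpace ℝ (Fin m) →L[ℝ] ℝ)) y := by
    intro k
    have hp : HasFDerivAt (fun z : EuclideanSpace ℝ (Fin m) => z k)
        (EuclideanSpace.proj k : EuclideanSpace ℝ (Fin m) →L[ℝ] ℝ) y :=
      (EuclideanSpace.proj k : EuclideanSpace ℝ (Fin m) →L[ℝ] ℝ).hasFDerivAt
    have := (hp.mul hp).const_mul (a k)
    have h2 : (fun z : EuclideanSpace ℝ (Fin m) => a k * (z k) ^ 2)
        = fun z : EuclideanSpace ℝ (Fin m) => a k * (z k * z k) := by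
      funext z; ring
    rw [h2]
    refine this.congr_fderiv ?_
    ext v
    simp
    ring
  have hsum := HasFDerivAt.fun_sum (fun k (_ : k ∈ Finset.univ) => h1 k)
  have := (hasFDerivAt_const b y).sub hsum
  refine this.congr_fderiv ?_
  simp [Gmap]

lemma proj_single {m : ℕ} (i j : Fin m) :
    (EuclideanSpace.proj i : EuclideanSpace ℝ (Fin m) →L[ℝ] ℝ) (EuclideanSpace.single j 1)
      = if i = j then 1 else 0 := by
  simp [EuclideanSpace.proj, EuclideanSpace.single_apply]

set_option maxHeartbeats 1000000 in
theorem quadric_graph_second_deriv_bound (m : ℕ) [NeZero m] (c : Fin m → ℝ) (ck b : ℝ)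
    (hc : ∀ i, c i ≠ 0) (hck : ck ≠ 0)
    (f : EuclideanSpace ℝ (Fin m) → ℝ)
    (hf : ∀ x, f x = Real.sqrt (b / ck - ∑ i, (c i / ck) * (x i) ^ 2))
    (S : Set (EuclideanSpace ℝ (Fin m)))
    (hS : S = {x | (∀ i, 0 < x i) ∧
      ∀ i, (c i) ^ 2 * (x i) ^ 2 ≤ ck ^ 2 * (f x) ^ 2})
    (hpos : ∀ x ∈ S, 0 < b / ck - ∑ i, (c i / ck) * (x i) ^ 2) :
    ∀ x ∈ S, ∀ i j,
      |fderiv ℝ (fun y => fderiv ℝ f y (EuclideanSpace.single i 1)) x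
          (EuclideanSpace.single j 1)| ≤
        2 / min (Finset.univ.inf' Finset.univ_nonempty (fun i => x i)) (f x) := by
  intro x hx i j
  set g : EuclideanSpace ℝ (Fin m) → ℝ :=
    fun y => b / ck - ∑ k, (c k / ck) * (y k) ^ 2 with hg
  have hfg : ∀ y, f y = Real.sqrt (g y) := fun y => hf y
  have hgx : 0 < g x := hpos x hx
  obtain ⟨hxpos, hxle⟩ : (∀ k, 0 < x k) ∧
      ∀ k, (c k) ^ 2 * (x k) ^ 2 ≤ ck ^ 2 * (f x) ^ 2 := by rw [hS] at hx; exact hx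
  -- continuity of g
  have hgcont : Continuous g := by
    apply continuous_const.sub
    exact continuous_finset_sum _ fun k _ =>
      continuous_const.mul
        (((EuclideanSpace.proj k : EuclideanSpace ℝ (Fin m) →L[ℝ] ℝ).continuous).pow 2)
  have hU : ∀ᶠ y in nhds x, 0 < g y :=
    (isOpen_lt continuous_const hgcont).mem_nhds hgx
  -- first derivative formula on the positivity set
  have hderiv : ∀ y : EuclideanSpace ℝ (Fin m), 0 < g y →
      fderiv ℝ f y (EuclideanSpace.single i 1)
        = (-(c i / ck)) * (y i * (Real.sqrt (g y))⁻¹) := by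
    intro y hy
    have hG := hasFDerivAt_quadric (fun k => c k / ck) (b / ck) y
    have hgy : g y ≠ 0 := ne_of_gt hy
    have hsqrt : HasFDerivAt (fun z => Real.sqrt (g z))
        ((1 / (2 * Real.sqrt (g y))) • Gmap (fun k => c k / ck) y) y := hG.sqrt hgy
    have hfd : HasFDerivAt f
        ((1 / (2 * Real.sqrt (g y))) • Gmap (fun k => c k / ck) y) y := by
      have hfun : f = fun z => Real.sqrt (g z) := funext hfg
      rw [hfun]; exact hsqrt
    rw [hfd.fderiv, ContinuousLinearMap.smul_apply, Gmap_apply_single, smul_eq_mul]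
    have hs : Real.sqrt (g y) ≠ 0 := ne_of_gt (Real.sqrt_pos.mpr hy)
    field_simp
  -- eventual equality of the first derivative
  have hev : (fun y => fderiv ℝ f y (EuclideanSpace.single i 1))
      =ᶠ[nhds x] fun y => (-(c i / ck)) * (y i * (Real.sqrt (g y))⁻¹) := by
    filter_upwards [hU] with y hy using hderiv y hy
  have key : fderiv ℝ (fun y => fderiv ℝ f y (EuclideanSpace.single i 1)) x
      = fderiv ℝ (fun y => (-(c i / ck)) * (y i * (Real.sqrt (g y))⁻¹)) x :=
    hev.fderiv_eq
  -- derivative of the explicit formula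
  set s : ℝ := Real.sqrt (g x) with hsdef
  have hs : 0 < s := Real.sqrt_pos.mpr hgx
  have hs2 : s ^ 2 = g x := Real.sq_sqrt hgx.le
  have hG := hasFDerivAt_quadric (fun k => c k / ck) (b / ck) x
  have hsqrt : HasFDerivAt (fun z => Real.sqrt (g z))
      ((1 / (2 * s)) • Gmap (fun k => c k / ck) x) x := hG.sqrt (ne_of_gt hgx)
  have hinv : HasFDerivAt (fun z => (Real.sqrt (g z))⁻¹)
      ((-(s ^ 2)⁻¹) • ((1 / (2 * s)) • Gmap (fun k => c k / ck) x)) x :=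
    (hasDerivAt_inv (ne_of_gt hs)).comp_hasFDerivAt x hsqrt
  have hproj : HasFDerivAt (fun z : EuclideanSpace ℝ (Fin m) => z i)
      (EuclideanSpace.proj i : EuclideanSpace ℝ (Fin m) →L[ℝ] ℝ) x :=
    (EuclideanSpace.proj i :
      EuclideanSpace ℝ (Fin m) →L[ℝ] ℝ).hasFDerivAt
  have hphi := (hproj.fun_mul hinv).const_mul (-(c i / ck))
  rw [key, hphi.fderiv]
  -- evaluate at the basis vector
  simp only [ContinuousLinearMap.smul_apply, ContinuousLinearMap.add_apply,
    Gmap_apply_single, proj_single, smul_eq_mul]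
  rw [hfg x, ← hsdef]
  -- abbreviations and basic facts
  set M : ℝ := min (Finset.univ.inf' Finset.univ_nonempty fun k => x k) s with hMdef
  have hMs : M ≤ s := min_le_right _ _
  have hMx : ∀ k, M ≤ x k := fun k =>
    le_trans (min_le_left _ _) (Finset.inf'_le _ (Finset.mem_univ k))
  have hMpos : 0 < M := lt_min (by rw [Finset.lt_inf'_iff]; exact fun k _ => hxpos k) hs
  have hxle' : ∀ k, (c k) ^ 2 * (x k) ^ 2 ≤ ck ^ 2 * s ^ 2 := by
    intro k
    have h := hxle k
    rwa [hfg x, ← hsdef] at h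
  have habs : ∀ k, |c k / ck * x k| ≤ s := by
    intro k
    have hck2 : (0:ℝ) < ck ^ 2 := by positivity
    have h2 : (c k / ck * x k) ^ 2 ≤ s ^ 2 := by
      rw [← mul_le_mul_iff_left₀ hck2]
      calc (c k / ck * x k) ^ 2 * ck ^ 2 = c k ^ 2 * x k ^ 2 := by field_simp
        _ ≤ ck ^ 2 * s ^ 2 := hxle' k
        _ = s ^ 2 * ck ^ 2 := by ring
    nlinarith [abs_nonneg (c k / ck * x k), sq_abs (c k / ck * x k)]
  -- rewrite the expression
  have hrewrite : (-(c i / ck) * (x i * (-(s ^ 2)⁻¹ * (1 / (2 * s) * -(2 * (c j / ck) * x j))) +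
        s⁻¹ * if i = j then 1 else 0))
      = -((c i / ck * x i) * (c j / ck * x j) / s ^ 3 +
          (if i = j then (c i / ck) / s else 0)) := by
    have hs0 : s ≠ 0 := ne_of_gt hs
    rcases eq_or_ne i j with rfl | hij
    · simp only [if_pos rfl, if_true]; field_simp
    · simp only [if_neg hij]; field_simp; ring
  rw [hrewrite, abs_neg]
  -- bound the two pieces
  have hu : |(c i / ck * x i) * (c j / ck * x j) / s ^ 3| ≤ 1 / s := by
    rw [abs_div, abs_of_pos (pow_pos hs 3), abs_mul]
    rw [div_le_div_iff₀ (pow_pos hs 3) hs]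
    have hab : |c i / ck * x i| * |c j / ck * x j| ≤ s * s :=
      mul_le_mul (habs i) (habs j) (abs_nonneg _) hs.le
    calc |c i / ck * x i| * |c j / ck * x j| * s ≤ (s * s) * s :=
          mul_le_mul_of_nonneg_right hab hs.le
      _ = 1 * s ^ 3 := by ring
  have hD : |(if i = j then (c i / ck) / s else 0 : ℝ)| ≤ 1 / x i := by
    rcases eq_or_ne i j with rfl | hij
    · rw [if_pos rfl, abs_div, abs_of_pos hs, div_le_div_iff₀ hs (hxpos i)]
      have h := habs i
      rw [abs_mul, abs_of_pos (hxpos i)] at h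
      linarith
    · rw [if_neg hij, abs_zero]
      exact (one_div_pos.mpr (hxpos i)).le
  calc |(c i / ck * x i) * (c j / ck * x j) / s ^ 3 +
        (if i = j then (c i / ck) / s else 0)|
      ≤ |(c i / ck * x i) * (c j / ck * x j) / s ^ 3| +
        |(if i = j then (c i / ck) / s else 0 : ℝ)| := abs_add_le _ _
    _ ≤ 1 / s + 1 / x i := add_le_add hu hD
    _ ≤ 1 / M + 1 / M :=
        add_le_add (one_div_le_one_div_of_le hMpos hMs) (one_div_le_one_div_of_le hMpos (hMx i))
    _ = 2 / M := by ring
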